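/- Let H ⊴ H̃ be finite groups, ℓ a prime, and let R̃ be a radical ℓ-subgroup of H̃ which is special with respect to H, meaning R̃ = O_ℓ(N_{H̃}(R̃ ∩ H)). Set R = R̃ ∩ H. Then the number of H-conjugacy classes of subgroups of H contained in the set { H ∩ R̃^g : g ∈ H̃ } equals the index |H̃ : H·N_{H̃}(R̃)|. -/

import Mathlib

/-- `O_ℓ(G)`: the largest normal `ℓ`-subgroup of `G`. -/
def pRadCore (ℓ : ℕ) (G : Type*) [Group G] : Subgroup G :=
  ⨆ (H : Subgroup G) (_ : H.Normal) (_ : IsPGroup ℓ H), H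

/-- `R` is a radical `ℓ`-subgroup of `G`: an `ℓ`-subgroup with `R = O_ℓ(N_G(R))`. -/
def IsRadicalPSubgroup (ℓ : ℕ) {G : Type*} [Group G] (R : Subgroup G) : Prop :=
  IsPGroup ℓ R ∧ R.subgroupOf (Subgroup.normalizer (R : Set G)) = pRadCore ℓ ↥(Subgroup.normalizer (R : Set G))

/-- The conjugate `g K g⁻¹` of a subgroup. -/
def conjSubgroup {G : Type*} [Group G] (g : G) (K : Subgroup G) : Subgroup G :=
  K.map (MulAut.conj g).toMonoidHom

section Aux
variable {G : Type*} [Group G]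

lemma mem_conjSubgroup {g x : G} {K : Subgroup G} :
    x ∈ conjSubgroup g K ↔ g⁻¹ * x * g ∈ K := by
  constructor
  · rintro ⟨y, hy, rfl⟩; simpa [mul_assoc] using hy
  · intro h; exact ⟨g⁻¹ * x * g, h, by simp [mul_assoc]⟩

lemma conjSubgroup_one (K : Subgroup G) : conjSubgroup 1 K = K := by
  ext x; simp [mem_conjSubgroup]

lemma conjSubgroup_conjSubgroup (a b : G) (K : Subgroup G) :
    conjSubgroup a (conjSubgroup b K) = conjSubgroup (a * b) K := by
  ext x; simp [mem_conjSubgroup, mul_assoc]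

lemma conjSubgroup_inf (g : G) (A B : Subgroup G) :
    conjSubgroup g (A ⊓ B) = conjSubgroup g A ⊓ conjSubgroup g B := by
  ext x; simp [mem_conjSubgroup]

lemma conjSubgroup_of_normal (g : G) {K : Subgroup G} (hK : K.Normal) :
    conjSubgroup g K = K := by
  ext x
  rw [mem_conjSubgroup]
  constructor
  · intro h; simpa [mul_assoc] using hK.conj_mem _ h g
  · intro h; simpa using hK.conj_mem _ h g⁻¹

lemma conjSubgroup_eq_self_iff {g : G} {K : Subgroup G} :
    conjSubgroup g K = K ↔ g ∈ Subgroup.normalizer (K : Set G) := by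
  rw [Subgroup.mem_normalizer_iff'']
  constructor
  · intro h x
    conv_lhs => rw [← h, mem_conjSubgroup]
  · intro h
    ext x
    rw [mem_conjSubgroup, ← h x]

lemma conjSubgroup_eq_conjSubgroup_iff {a b : G} {K : Subgroup G} :
    conjSubgroup a K = conjSubgroup b K ↔ a⁻¹ * b ∈ Subgroup.normalizer (K : Set G) := by
  rw [← conjSubgroup_eq_self_iff]
  constructor
  · intro h
    rw [← conjSubgroup_conjSubgroup]
    rw [← h, conjSubgroup_conjSubgroup, inv_mul_cancel, conjSubgroup_one]
  · intro h
    have := congrArg (conjSubgroup a) h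
    rw [conjSubgroup_conjSubgroup, mul_inv_cancel_left] at this
    exact this.symm

end Aux

lemma pRadCore_normal (ℓ : ℕ) (G : Type*) [Group G] : (pRadCore ℓ G).Normal := by
  constructor
  intro n hn g
  have key : pRadCore ℓ G ≤ (pRadCore ℓ G).comap (MulAut.conj g).toMonoidHom := by
    refine iSup_le fun K => iSup_le fun hK => iSup_le fun hpK => ?_
    rw [← Subgroup.map_le_iff_le_comap]
    have : K.map (MulAut.conj g).toMonoidHom = K := conjSubgroup_of_normal g hK
    rw [this]
    exact le_iSup_of_le K (le_iSup_of_le hK (le_iSup_of_le hpK le_rfl))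
  simpa using key hn

lemma spec_conj_le {ℓ : ℕ} {G : Type*} [Group G] (N : Subgroup G)
    {x : G} (hx : x ∈ N) :
    conjSubgroup x ((pRadCore ℓ N).map N.subtype) ≤ (pRadCore ℓ N).map N.subtype := by
  rintro _ ⟨_, ⟨w, hw, rfl⟩, rfl⟩
  exact ⟨((⟨x, hx⟩ : N) * w * (⟨x, hx⟩ : N)⁻¹ : N),
    (pRadCore_normal ℓ N).conj_mem w hw ⟨x, hx⟩, rfl⟩

lemma normalizer_eq {ℓ : ℕ} {G : Type*} [Group G] (H R' : Subgroup G) (hH : H.Normal)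
    (hspec : R' = ((pRadCore ℓ ↥(Subgroup.normalizer ((R' ⊓ H : Subgroup G) : Set G))).map (Subgroup.normalizer ((R' ⊓ H : Subgroup G) : Set G)).subtype)) :
    Subgroup.normalizer ((R' ⊓ H : Subgroup G) : Set G) = Subgroup.normalizer (R' : Set G) := by
  apply le_antisymm
  · intro x hx
    rw [← conjSubgroup_eq_self_iff]
    apply le_antisymm
    · rw [hspec]
      exact spec_conj_le _ hx
    · have h2 := spec_conj_le (ℓ := ℓ) _ ((Subgroup.normalizer ((R' ⊓ H : Subgroup G) : Set G)).inv_mem hx)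
      rw [← hspec] at h2
      have h3 : conjSubgroup x (conjSubgroup x⁻¹ R') ≤ conjSubgroup x R' :=
        Subgroup.map_mono h2
      rwa [conjSubgroup_conjSubgroup, mul_inv_cancel, conjSubgroup_one] at h3
  · intro x hx
    rw [← conjSubgroup_eq_self_iff] at hx ⊢
    rw [conjSubgroup_inf, conjSubgroup_of_normal x hH, hx]

open Pointwise in
lemma key_iff {G : Type*} [Group G] (H R' : Subgroup G) (hH : H.Normal)
    (hnorm : Subgroup.normalizer ((R' ⊓ H : Subgroup G) : Set G) = Subgroup.normalizer (R' : Set G)) (g₁ g₂ : G) :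
    (∃ h ∈ H, conjSubgroup h (conjSubgroup g₁ R' ⊓ H) = conjSubgroup g₂ R' ⊓ H) ↔
      g₁⁻¹ * g₂ ∈ H ⊔ Subgroup.normalizer (R' : Set G) := by
  haveI := hH
  have hc : ∀ g : G, conjSubgroup g R' ⊓ H = conjSubgroup g (R' ⊓ H) := fun g => by
    rw [conjSubgroup_inf, conjSubgroup_of_normal g hH]
  have hmem : (g₁⁻¹ * g₂ ∈ H ⊔ Subgroup.normalizer (R' : Set G)) ↔
      g₁⁻¹ * g₂ ∈ ((H : Set G) * (Subgroup.normalizer (R' : Set G) : Set G)) := by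
    rw [← SetLike.mem_coe, Subgroup.normal_mul]
  rw [hmem]
  constructor
  · rintro ⟨h, hh, heq⟩
    rw [hc, hc, conjSubgroup_conjSubgroup, conjSubgroup_eq_conjSubgroup_iff, hnorm] at heq
    refine ⟨g₁⁻¹ * h * g₁, by simpa using hH.conj_mem h hh g₁⁻¹, (h * g₁)⁻¹ * g₂, heq, ?_⟩
    group
  · rintro ⟨a, ha, b, hb, hab⟩
    refine ⟨g₁ * a * g₁⁻¹, hH.conj_mem a ha g₁, ?_⟩
    rw [hc, hc, conjSubgroup_conjSubgroup, conjSubgroup_eq_conjSubgroup_iff, hnorm]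
    have hab' : a * b = g₁⁻¹ * g₂ := hab
    have hg2 : g₂ = g₁ * a * b := by rw [mul_assoc, hab', mul_inv_cancel_left]
    rw [hg2]
    have : (g₁ * a * g₁⁻¹ * g₁)⁻¹ * (g₁ * a * b) = b := by group
    rw [this]
    exact hb

/-- Let `H ⊴ H̃` be finite groups, `ℓ` a prime, and `R̃` a radical
`ℓ`-subgroup of `H̃` which is special with respect to `H`, i.e.
`R̃ = O_ℓ(N_{H̃}(R̃ ∩ H))`.  Then the number of `H`-conjugacy classes of subgroups of `H`
contained in `{ H ∩ R̃^g : g ∈ H̃ }` equals `|H̃ : H · N_{H̃}(R̃)|`. -/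
theorem stmt12 {G : Type*} [Group G] [Fintype G] (ℓ : ℕ) (hℓ : ℓ.Prime)
    (H : Subgroup G) (hH : H.Normal)
    (R' : Subgroup G) (hrad : IsRadicalPSubgroup ℓ R')
    (hspec : R' = ((pRadCore ℓ ↥(Subgroup.normalizer ((R' ⊓ H : Subgroup G) : Set G))).map (Subgroup.normalizer ((R' ⊓ H : Subgroup G) : Set G)).subtype)) :
    Nat.card (Quot (fun (K₁ K₂ : {K : Subgroup G // ∃ g : G, K = conjSubgroup g R' ⊓ H}) =>
        ∃ h ∈ H, conjSubgroup h (K₁ : Subgroup G) = (K₂ : Subgroup G))) =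
      (H ⊔ Subgroup.normalizer (R' : Set G)).index := by
  have hnorm := normalizer_eq H R' hH hspec
  have key := key_iff H R' hH hnorm
  rw [Subgroup.index_eq_card]
  refine Nat.card_congr (Equiv.ofBijective
    (Quot.lift (fun K => (QuotientGroup.mk K.2.choose : G ⧸ (H ⊔ Subgroup.normalizer (R' : Set G)))) ?_)
    ⟨?_, ?_⟩)
  · rintro K₁ K₂ ⟨h, hh, heq⟩
    rw [QuotientGroup.eq]
    apply (key _ _).mp
    refine ⟨h, hh, ?_⟩
    rw [← K₁.2.choose_spec, ← K₂.2.choose_spec]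
    exact heq
  · intro q₁ q₂
    induction q₁ using Quot.ind with | _ K₁ =>
    induction q₂ using Quot.ind with | _ K₂ =>
    intro hq
    simp only [Quot.lift_mk] at hq
    rw [QuotientGroup.eq] at hq
    obtain ⟨h, hh, heq⟩ := (key _ _).mpr hq
    apply Quot.sound
    refine ⟨h, hh, ?_⟩
    rw [K₁.2.choose_spec, K₂.2.choose_spec]
    exact heq
  · intro x
    induction x using QuotientGroup.induction_on with | _ g =>
    refine ⟨Quot.mk _ ⟨conjSubgroup g R' ⊓ H, g, rfl⟩, ?_⟩
    have hspec' := (⟨g, rfl⟩ : ∃ g' : G, conjSubgroup g R' ⊓ H = conjSubgroup g' R' ⊓ H).choose_spec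
    show (QuotientGroup.mk _ : G ⧸ (H ⊔ Subgroup.normalizer (R' : Set G))) = _
    rw [QuotientGroup.eq]
    apply (key _ _).mp
    exact ⟨1, one_mem _, by rw [conjSubgroup_one]; exact hspec'.symm⟩
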